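/- Let H be a Hilbert space and suppose g : [0,1] → H satisfies the strong local nondeterminism asymptotics: for each i ≠ j, the normalized correlation ⟨Δg(t_j), Δg(t_i)⟩ / (‖Δg(t_j)‖ ‖Δg(t_i)‖) → 0 as t_{i+1} - t_i → 0, and ‖Δg(t₁)‖ → 0 as t₂ - t₁ → 0. Then for every h ∈ H, the projection P_{t₁t₂} h of h onto span{g(t₂) - g(t₁)} tends to 0 (weakly, i.e., ⟨g(t), g(t₂)-g(t₁)⟩/‖g(t₂)-g(t₁)‖ → 0 for each t) as t₂ - t₁ → 0. -/

import Mathlib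

open Filter
open scoped RealInnerProductSpace Topology

section Aux
variable {H : Type*} [NormedAddCommGroup H] [InnerProductSpace ℝ H]

lemma inner_div_norm_eq (x y : H) :
    ⟪x, y⟫ / ‖y‖ = (⟪x, y⟫ / (‖x‖ * ‖y‖)) * ‖x‖ := by
  rcases eq_or_ne x 0 with rfl | hx
  · simp
  · have hx' : ‖x‖ ≠ 0 := norm_ne_zero_iff.mpr hx
    field_simp

lemma abs_inner_div_norm_le (x y : H) : |⟪x, y⟫ / ‖y‖| ≤ ‖x‖ := by
  rcases eq_or_ne y 0 with rfl | hy
  · simp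
  · have hy' : (0:ℝ) < ‖y‖ := norm_pos_iff.mpr hy
    rw [abs_div, abs_of_pos hy', div_le_iff₀ hy']
    exact abs_real_inner_le_norm x y

lemma gen_increment_tendsto (g : ℝ → H) (hg : ContinuousOn g (Set.Icc 0 1))
    (hcorr : ∀ a b u v : ℕ → ℝ,
      (∀ n, 0 ≤ a n ∧ a n < b n ∧ b n ≤ 1) →
      (∀ n, 0 ≤ u n ∧ u n < v n ∧ v n ≤ 1) →
      (∀ n, b n ≤ u n ∨ v n ≤ a n) →
      Tendsto (fun n => v n - u n) atTop (𝓝 0) →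
      Tendsto (fun n =>
        ⟪g (b n) - g (a n), g (v n) - g (u n)⟫ /
          (‖g (b n) - g (a n)‖ * ‖g (v n) - g (u n)‖)) atTop (𝓝 0))
    (r s : ℝ) (hr : 0 ≤ r) (hs : s ≤ 1) (hrs : r ≤ s)
    (u v : ℕ → ℝ) (huv : ∀ n, 0 ≤ u n ∧ u n < v n ∧ v n ≤ 1)
    (hsh : Tendsto (fun n => v n - u n) atTop (𝓝 0)) :
    Tendsto (fun n => ⟪g s - g r, g (v n) - g (u n)⟫ / ‖g (v n) - g (u n)‖)
      atTop (𝓝 0) := by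
  obtain ⟨C, hC⟩ := (isCompact_Icc (a := (0:ℝ)) (b := 1)).exists_bound_of_continuousOn hg
  set α : ℕ → ℝ := fun n => max r (min (u n) s) with hα
  set β : ℕ → ℝ := fun n => max r (min (v n) s) with hβ
  have hrα : ∀ n, r ≤ α n := fun n => le_max_left _ _
  have hαs : ∀ n, α n ≤ s := fun n => max_le hrs (min_le_right _ _)
  have hrβ : ∀ n, r ≤ β n := fun n => le_max_left _ _
  have hβs : ∀ n, β n ≤ s := fun n => max_le hrs (min_le_right _ _)
  have hαβ : ∀ n, α n ≤ β n := fun n =>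
    max_le_max le_rfl (min_le_min (le_of_lt (huv n).2.1) le_rfl)
  have hαmem : ∀ n, α n ∈ Set.Icc (0:ℝ) 1 := fun n =>
    ⟨le_trans hr (hrα n), le_trans (hαs n) hs⟩
  have hβmem : ∀ n, β n ∈ Set.Icc (0:ℝ) 1 := fun n =>
    ⟨le_trans hr (hrβ n), le_trans (hβs n) hs⟩
  have hC2 : ∀ x ∈ Set.Icc (0:ℝ) 1, ∀ y ∈ Set.Icc (0:ℝ) 1, ‖g x - g y‖ ≤ C + C := by
    intro x hx y hy
    exact le_trans (norm_sub_le _ _) (add_le_add (hC x hx) (hC y hy))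
  -- difference of clamps is controlled
  have hβα : Tendsto (fun n => β n - α n) atTop (𝓝 0) := by
    have h0 : ∀ n, 0 ≤ β n - α n := fun n => sub_nonneg.mpr (hαβ n)
    have h1 : ∀ n, β n - α n ≤ v n - u n := by
      intro n
      obtain ⟨hu0, huv', hv1⟩ := huv n
      simp only [hα, hβ]
      rcases le_total (u n) s with h|h <;> rcases le_total (v n) s with h'|h' <;>
        rcases le_total r (u n) with h''|h'' <;> rcases le_total r (v n) with h'''|h''' <;>
        simp [min_eq_left, min_eq_right, max_eq_left, max_eq_right, *] <;> linarith
    have := squeeze_zero h0 h1 hsh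
    exact this
  -- T2 tendsto 0
  have hgβα : Tendsto (fun n => ‖g (β n) - g (α n)‖) atTop (𝓝 0) := by
    have huc := isCompact_Icc.uniformContinuousOn_of_continuous hg
    rw [Metric.uniformContinuousOn_iff] at huc
    rw [Metric.tendsto_atTop]
    intro ε hε
    obtain ⟨δ, hδ, hδ'⟩ := huc ε hε
    rw [Metric.tendsto_atTop] at hβα
    obtain ⟨N, hN⟩ := hβα δ hδ
    refine ⟨N, fun n hn => ?_⟩
    have h1 := hN n hn
    rw [Real.dist_eq, sub_zero] at h1
    have h2 : dist (β n) (α n) < δ := by rw [Real.dist_eq]; exact h1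
    have h3 := hδ' (β n) (hβmem n) (α n) (hαmem n) h2
    rw [Real.dist_eq, sub_zero, abs_of_nonneg (norm_nonneg _), ← dist_eq_norm]
    exact h3
  have hT2 : Tendsto (fun n =>
      ⟪g (β n) - g (α n), g (v n) - g (u n)⟫ / ‖g (v n) - g (u n)‖) atTop (𝓝 0) := by
    refine squeeze_zero_norm (fun n => ?_) hgβα
    rw [Real.norm_eq_abs]
    exact abs_inner_div_norm_le _ _
  -- T3 tendsto 0
  have hT3 : Tendsto (fun n =>
      ⟪g (α n) - g r, g (v n) - g (u n)⟫ / ‖g (v n) - g (u n)‖) atTop (𝓝 0) := by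
    apply tendsto_of_subseq_tendsto
    intro ns hns
    by_cases hfreq : ∃ᶠ k in atTop, α (ns k) = r
    · obtain ⟨φ, hφmono, hφ⟩ := extraction_of_frequently_atTop hfreq
      refine ⟨φ, ?_⟩
      have : (fun k => ⟪g (α (ns (φ k))) - g r, g (v (ns (φ k))) - g (u (ns (φ k)))⟫ /
          ‖g (v (ns (φ k))) - g (u (ns (φ k)))‖) = fun _ => 0 := by
        funext k; rw [hφ k]; simp
      rw [this]; exact tendsto_const_nhds
    · rw [Filter.not_frequently] at hfreq
      obtain ⟨K, hK⟩ := Filter.eventually_atTop.mp hfreq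
      refine ⟨fun k => k + K, ?_⟩
      have hms : Tendsto (fun k : ℕ => ns (k + K)) atTop atTop :=
        hns.comp (tendsto_add_atTop_nat K)
      have hne : ∀ k, r < α (ns (k + K)) := by
        intro k
        exact lt_of_le_of_ne (hrα _) (fun h => hK (k + K) (Nat.le_add_left K k) h.symm)
      have hcap : ∀ k, α (ns (k + K)) ≤ u (ns (k + K)) := by
        intro k
        have h1 : r < min (u (ns (k + K))) s := by
          by_contra h
          push_neg at h
          have h2 : α (ns (k + K)) = r := max_eq_left h
          exact absurd h2 (hne k).ne'
        calc α (ns (k + K)) = min (u (ns (k + K))) s := max_eq_right h1.le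
          _ ≤ u (ns (k + K)) := min_le_left _ _
      have hc := hcorr (fun _ => r) (fun k => α (ns (k + K)))
        (fun k => u (ns (k + K))) (fun k => v (ns (k + K)))
        (fun k => ⟨hr, hne k, le_trans (hαs _) hs⟩)
        (fun k => huv _)
        (fun k => Or.inl (hcap k))
        (hsh.comp hms)
      refine squeeze_zero_norm (fun k => ?_) (by simpa using hc.abs.mul_const (C + C))
      show ‖⟪g (α (ns (k + K))) - g r, g (v (ns (k + K))) - g (u (ns (k + K)))⟫ /
          ‖g (v (ns (k + K))) - g (u (ns (k + K)))‖‖ ≤ _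
      rw [Real.norm_eq_abs, inner_div_norm_eq, abs_mul, abs_of_nonneg (norm_nonneg _)]
      exact mul_le_mul_of_nonneg_left
        (hC2 _ (hαmem _) _ ⟨hr, le_trans hrs hs⟩) (abs_nonneg _)
  -- T1 tendsto 0
  have hT1 : Tendsto (fun n =>
      ⟪g s - g (β n), g (v n) - g (u n)⟫ / ‖g (v n) - g (u n)‖) atTop (𝓝 0) := by
    apply tendsto_of_subseq_tendsto
    intro ns hns
    by_cases hfreq : ∃ᶠ k in atTop, β (ns k) = s
    · obtain ⟨φ, hφmono, hφ⟩ := extraction_of_frequently_atTop hfreq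
      refine ⟨φ, ?_⟩
      have : (fun k => ⟪g s - g (β (ns (φ k))), g (v (ns (φ k))) - g (u (ns (φ k)))⟫ /
          ‖g (v (ns (φ k))) - g (u (ns (φ k)))‖) = fun _ => 0 := by
        funext k; rw [hφ k]; simp
      rw [this]; exact tendsto_const_nhds
    · rw [Filter.not_frequently] at hfreq
      obtain ⟨K, hK⟩ := Filter.eventually_atTop.mp hfreq
      refine ⟨fun k => k + K, ?_⟩
      have hms : Tendsto (fun k : ℕ => ns (k + K)) atTop atTop :=
        hns.comp (tendsto_add_atTop_nat K)
      have hne : ∀ k, β (ns (k + K)) < s := by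
        intro k
        exact lt_of_le_of_ne (hβs _) (fun h => hK (k + K) (Nat.le_add_left K k) h)
      have hcap : ∀ k, v (ns (k + K)) ≤ β (ns (k + K)) := by
        intro k
        rcases le_total (v (ns (k + K))) s with h|h
        · calc v (ns (k + K)) = min (v (ns (k + K))) s := (min_eq_left h).symm
            _ ≤ β (ns (k + K)) := le_max_right _ _
        · exfalso
          have h2 : β (ns (k + K)) = s := by
            show max r (min (v (ns (k + K))) s) = s
            rw [min_eq_right h, max_eq_right hrs]
          exact absurd h2 (hne k).ne
      have hc := hcorr (fun k => β (ns (k + K))) (fun _ => s)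
        (fun k => u (ns (k + K))) (fun k => v (ns (k + K)))
        (fun k => ⟨le_trans hr (hrβ _), hne k, hs⟩)
        (fun k => huv _)
        (fun k => Or.inr (hcap k))
        (hsh.comp hms)
      refine squeeze_zero_norm (fun k => ?_) (by simpa using hc.abs.mul_const (C + C))
      show ‖⟪g s - g (β (ns (k + K))), g (v (ns (k + K))) - g (u (ns (k + K)))⟫ /
          ‖g (v (ns (k + K))) - g (u (ns (k + K)))‖‖ ≤ _
      rw [Real.norm_eq_abs, inner_div_norm_eq, abs_mul, abs_of_nonneg (norm_nonneg _)]
      exact mul_le_mul_of_nonneg_left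
        (hC2 _ ⟨hr.trans hrs, hs⟩ _ (hβmem _)) (abs_nonneg _)
  -- combine
  have hdecomp : ∀ n, ⟪g s - g r, g (v n) - g (u n)⟫ / ‖g (v n) - g (u n)‖ =
      ⟪g s - g (β n), g (v n) - g (u n)⟫ / ‖g (v n) - g (u n)‖ +
      ⟪g (β n) - g (α n), g (v n) - g (u n)⟫ / ‖g (v n) - g (u n)‖ +
      ⟪g (α n) - g r, g (v n) - g (u n)⟫ / ‖g (v n) - g (u n)‖ := by
    intro n
    have h : g s - g r = (g s - g (β n)) + (g (β n) - g (α n)) + (g (α n) - g r) := by abel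
    rw [h, inner_add_left, inner_add_left, add_div, add_div]
  have hsum := (hT1.add hT2).add hT3
  rw [add_zero, add_zero] at hsum
  exact hsum.congr fun n => (hdecomp n).symm


lemma bessel_contradiction {H : Type*} [NormedAddCommGroup H] [InnerProductSpace ℝ H]
    (h : H) (ε : ℝ) (hε : 0 < ε) (e : ℕ → H)
    (he1 : ∀ j, ‖e j‖ ≤ 1) (heg : ∀ j, ε ≤ ⟪h, e j⟫)
    (horth : ∀ m, Tendsto (fun k => ⟪e m, e k⟫) atTop (𝓝 0)) : False := by
  have hgt : 0 < ‖h‖ := by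
    have h1 := heg 0
    have h2 : ⟪h, e 0⟫ ≤ ‖h‖ * ‖e 0‖ := real_inner_le_norm _ _
    have h3 : ‖h‖ * ‖e 0‖ ≤ ‖h‖ * 1 :=
      mul_le_mul_of_nonneg_left (he1 0) (norm_nonneg _)
    nlinarith [norm_nonneg h]
  set δ : ℝ := ε ^ 2 / (2 * ‖h‖ ^ 2) with hδdef
  have hδpos : 0 < δ := by positivity
  -- choose thresholds for near-orthogonality
  have hA : ∀ m, ∃ A : ℕ, ∀ k ≥ A, |⟪e m, e k⟫| < δ := by
    intro m
    have h0 := (horth m)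
    rw [Metric.tendsto_atTop] at h0
    obtain ⟨A, hA⟩ := h0 δ hδpos
    exact ⟨A, fun k hk => by have := hA k hk; rwa [Real.dist_eq, sub_zero] at this⟩
  choose A hA using hA
  set B : ℕ → ℕ := fun j => (Finset.range (j + 1)).sup A with hB
  set nn : ℕ → ℕ := fun j => Nat.rec 0 (fun _ prev => max (prev + 1) (B prev)) j with hnn
  have hnnsucc : ∀ j, nn (j + 1) = max (nn j + 1) (B (nn j)) := fun j => rfl
  have hnnmono : StrictMono nn := by
    apply strictMono_nat_of_lt_succ
    intro j
    rw [hnnsucc]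
    exact lt_of_lt_of_le (Nat.lt_succ_self _) (le_max_left _ _)
  have hkey : ∀ i j, i < j → |⟪e (nn i), e (nn j)⟫| < δ := by
    intro i j hij
    apply hA (nn i)
    have h1 : nn (i + 1) ≤ nn j := hnnmono.monotone (Nat.succ_le_of_lt hij)
    have h2 : A (nn i) ≤ B (nn i) :=
      Finset.le_sup (Finset.mem_range.mpr (Nat.lt_succ_self _))
    have h3 : B (nn i) ≤ nn (i + 1) := by rw [hnnsucc]; exact le_max_right _ _
    omega
  set N : ℕ := ⌈2 * ‖h‖ ^ 2 / ε ^ 2⌉₊ + 1 with hN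
  have hNgt : 2 * ‖h‖ ^ 2 / ε ^ 2 < (N : ℝ) := by
    rw [hN]
    push_cast
    exact lt_of_le_of_lt (Nat.le_ceil _) (lt_add_one _)
  have hNpos : 0 < (N : ℝ) := by positivity
  set w : H := ∑ j ∈ Finset.range N, e (nn j) with hw
  have hw1 : (N : ℝ) * ε ≤ ⟪h, w⟫ := by
    rw [hw, inner_sum]
    calc (N : ℝ) * ε = ∑ _j ∈ Finset.range N, ε := by
          rw [Finset.sum_const, Finset.card_range, nsmul_eq_mul]
      _ ≤ ∑ j ∈ Finset.range N, ⟪h, e (nn j)⟫ :=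
          Finset.sum_le_sum fun j _ => heg (nn j)
  have hw2 : ⟪w, w⟫ ≤ (N : ℝ) + (N : ℝ) ^ 2 * δ := by
    rw [hw, sum_inner]
    have hterm : ∀ i ∈ Finset.range N, ∀ j ∈ Finset.range N,
        ⟪e (nn i), e (nn j)⟫ ≤ (if i = j then (1:ℝ) else 0) + δ := by
      intro i _ j _
      rcases lt_trichotomy i j with hlt | rfl | hlt
      · have := hkey i j hlt
        simp only [if_neg hlt.ne, zero_add]
        exact le_of_lt (lt_of_le_of_lt (le_abs_self _) this)
      · rw [if_pos rfl]
        have h1 : ⟪e (nn i), e (nn i)⟫ = ‖e (nn i)‖ ^ 2 := real_inner_self_eq_norm_sq _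
        have h2 : ‖e (nn i)‖ ^ 2 ≤ 1 := by
          have := he1 (nn i)
          nlinarith [norm_nonneg (e (nn i))]
        linarith
      · have := hkey j i hlt
        rw [real_inner_comm]
        simp only [if_neg hlt.ne', zero_add]
        exact le_of_lt (lt_of_le_of_lt (le_abs_self _) this)
    calc ∑ i ∈ Finset.range N, ⟪e (nn i), ∑ j ∈ Finset.range N, e (nn j)⟫
        = ∑ i ∈ Finset.range N, ∑ j ∈ Finset.range N, ⟪e (nn i), e (nn j)⟫ := by
          refine Finset.sum_congr rfl fun i _ => ?_
          rw [inner_sum]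
      _ ≤ ∑ i ∈ Finset.range N, ∑ j ∈ Finset.range N, ((if i = j then (1:ℝ) else 0) + δ) :=
          Finset.sum_le_sum fun i hi => Finset.sum_le_sum fun j hj => hterm i hi j hj
      _ = ∑ i ∈ Finset.range N, (1 + (N:ℝ) * δ) := by
          refine Finset.sum_congr rfl fun i hi => ?_
          rw [Finset.sum_add_distrib, Finset.sum_ite_eq, if_pos hi, Finset.sum_const,
            Finset.card_range, nsmul_eq_mul]
      _ = (N : ℝ) + (N : ℝ) ^ 2 * δ := by
          rw [Finset.sum_const, Finset.card_range, nsmul_eq_mul]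
          ring
  have hCS : ⟪h, w⟫ ≤ ‖h‖ * ‖w‖ := real_inner_le_norm _ _
  have hww : ⟪w, w⟫ = ‖w‖ ^ 2 := real_inner_self_eq_norm_sq _
  have hδmul : ‖h‖ ^ 2 * δ = ε ^ 2 / 2 := by
    rw [hδdef]
    field_simp
  have hsq : ((N : ℝ) * ε) ^ 2 ≤ ‖h‖ ^ 2 * ((N : ℝ) + (N : ℝ) ^ 2 * δ) := by
    have h0 : 0 ≤ (N : ℝ) * ε := by positivity
    have h1 : (N : ℝ) * ε ≤ ‖h‖ * ‖w‖ := le_trans hw1 hCS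
    have h2 : ((N : ℝ) * ε) ^ 2 ≤ (‖h‖ * ‖w‖) ^ 2 := by nlinarith
    calc ((N : ℝ) * ε) ^ 2 ≤ (‖h‖ * ‖w‖) ^ 2 := h2
      _ = ‖h‖ ^ 2 * ‖w‖ ^ 2 := by ring
      _ ≤ ‖h‖ ^ 2 * ((N : ℝ) + (N : ℝ) ^ 2 * δ) := by
          rw [← hww]
          exact mul_le_mul_of_nonneg_left hw2 (by positivity)
  have h5 : ‖h‖ ^ 2 * ((N : ℝ) + (N : ℝ) ^ 2 * δ) =
      ‖h‖ ^ 2 * (N : ℝ) + (N : ℝ) ^ 2 * (ε ^ 2 / 2) := by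
    rw [show ‖h‖ ^ 2 * ((N : ℝ) + (N : ℝ) ^ 2 * δ) =
      ‖h‖ ^ 2 * (N : ℝ) + (N : ℝ) ^ 2 * (‖h‖ ^ 2 * δ) by ring, hδmul]
  rw [h5] at hsq
  have hfinal : (N : ℝ) ≤ 2 * ‖h‖ ^ 2 / ε ^ 2 := by
    rw [le_div_iff₀ (by positivity : (0:ℝ) < ε ^ 2)]
    nlinarith [hsq, hNpos]
  linarith

end Aux



/-- If `g : [0,1] → H` satisfies the strong local nondeterminism asymptotics (the
normalized correlation of increments over disjoint intervals tends to `0` when one of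
the intervals shrinks, and the norm of an increment tends to `0` with the interval),
then for every `t`, `⟪g t, g t₂ - g t₁⟫ / ‖g t₂ - g t₁‖ → 0` as `t₂ - t₁ → 0`,
i.e. the projections onto the small increments tend weakly to zero. -/
theorem weak_convergence_of_projections_of_strong_local_nondeterminism
    {H : Type*} [NormedAddCommGroup H] [InnerProductSpace ℝ H]
    (g : ℝ → H) (hg : ContinuousOn g (Set.Icc 0 1))
    (hcorr : ∀ a b u v : ℕ → ℝ,
      (∀ n, 0 ≤ a n ∧ a n < b n ∧ b n ≤ 1) →
      (∀ n, 0 ≤ u n ∧ u n < v n ∧ v n ≤ 1) →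
      (∀ n, b n ≤ u n ∨ v n ≤ a n) →
      Tendsto (fun n => v n - u n) atTop (𝓝 0) →
      Tendsto (fun n =>
        ⟪g (b n) - g (a n), g (v n) - g (u n)⟫ /
          (‖g (b n) - g (a n)‖ * ‖g (v n) - g (u n)‖)) atTop (𝓝 0))
    (hnorm : ∀ u v : ℕ → ℝ,
      (∀ n, 0 ≤ u n ∧ u n < v n ∧ v n ≤ 1) →
      Tendsto (fun n => v n - u n) atTop (𝓝 0) →
      Tendsto (fun n => ‖g (v n) - g (u n)‖) atTop (𝓝 0)) :
    ∀ t ∈ Set.Icc (0:ℝ) 1, ∀ u v : ℕ → ℝ,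
      (∀ n, 0 ≤ u n ∧ u n < v n ∧ v n ≤ 1) →
      Tendsto (fun n => v n - u n) atTop (𝓝 0) →
      Tendsto (fun n => ⟪g t, g (v n) - g (u n)⟫ / ‖g (v n) - g (u n)‖) atTop (𝓝 0) := by
  intro t ht u v huv hsh
  set d : ℕ → H := fun n => ‖g (v n) - g (u n)‖⁻¹ • (g (v n) - g (u n)) with hd
  have hinner : ∀ (x : H) (n : ℕ),
      ⟪x, d n⟫ = ⟪x, g (v n) - g (u n)⟫ / ‖g (v n) - g (u n)‖ := by
    intro x n
    rw [hd]
    rw [real_inner_smul_right]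
    rw [div_eq_inv_mul]
  have hd1 : ∀ n, ‖d n‖ ≤ 1 := by
    intro n
    rcases eq_or_ne (g (v n) - g (u n)) 0 with h | h
    · simp [hd, h]
    · have hpos : (0:ℝ) < ‖g (v n) - g (u n)‖ := norm_pos_iff.mpr h
      rw [hd]
      rw [norm_smul, Real.norm_eq_abs, abs_of_nonneg (inv_nonneg.mpr hpos.le),
        inv_mul_cancel₀ hpos.ne']
  set c : ℕ → ℝ := fun n => ⟪g t, g (v n) - g (u n)⟫ / ‖g (v n) - g (u n)‖ with hc
  by_contra hcon
  -- extract ε and a frequent set where |c n| ≥ ε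
  rw [Metric.tendsto_atTop] at hcon
  push_neg at hcon
  obtain ⟨ε, hε, hfr⟩ := hcon
  have hfr' : ∃ᶠ n in atTop, ε ≤ |c n| := by
    rw [Filter.frequently_atTop]
    intro N
    obtain ⟨n, hn, hn'⟩ := hfr N
    exact ⟨n, hn, by rwa [Real.dist_eq, sub_zero] at hn'⟩
  have hsign : (∃ᶠ n in atTop, ε ≤ c n) ∨ (∃ᶠ n in atTop, ε ≤ -c n) := by
    rw [← Filter.frequently_or_distrib]
    exact hfr'.mono fun n hn => le_abs.mp hn
  obtain ⟨σ, hσ, hfr2⟩ : ∃ σ : ℝ, (σ = 1 ∨ σ = -1) ∧ ∃ᶠ n in atTop, ε ≤ σ * c n := by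
    rcases hsign with h | h
    · exact ⟨1, Or.inl rfl, by simpa using h⟩
    · exact ⟨-1, Or.inr rfl, by simpa using h⟩
  obtain ⟨φ, hφmono, hφ⟩ := extraction_of_frequently_atTop hfr2
  set e : ℕ → H := fun j => σ • d (φ j) with he
  have hσσ : σ * σ = 1 := by rcases hσ with rfl | rfl <;> norm_num
  have he1 : ∀ j, ‖e j‖ ≤ 1 := by
    intro j
    rw [he, norm_smul, Real.norm_eq_abs]
    have : |σ| = 1 := by rcases hσ with rfl | rfl <;> norm_num
    rw [this, one_mul]
    exact hd1 _
  have heg : ∀ j, ε ≤ ⟪g t, e j⟫ := by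
    intro j
    rw [he, real_inner_smul_right, hinner]
    exact hφ j
  have horth : ∀ m, Tendsto (fun k => ⟪e m, e k⟫) atTop (𝓝 0) := by
    intro m
    have hee : ∀ k, ⟪e m, e k⟫ =
        ‖g (v (φ m)) - g (u (φ m))‖⁻¹ *
          (⟪g (v (φ m)) - g (u (φ m)), g (v (φ k)) - g (u (φ k))⟫ /
            ‖g (v (φ k)) - g (u (φ k))‖) := by
      intro k
      rw [he, real_inner_smul_left, real_inner_smul_right, ← mul_assoc, hσσ, one_mul,
        hd, real_inner_smul_left, hinner]
    have hgen := gen_increment_tendsto g hg hcorr (u (φ m)) (v (φ m))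
      (huv (φ m)).1 (huv (φ m)).2.2 (le_of_lt (huv (φ m)).2.1)
      (fun k => u (φ k)) (fun k => v (φ k)) (fun k => huv _)
      (hsh.comp hφmono.tendsto_atTop)
    have := hgen.const_mul (‖g (v (φ m)) - g (u (φ m))‖⁻¹)
    rw [mul_zero] at this
    exact this.congr fun k => (hee k).symm
  exact bessel_contradiction (g t) ε hε e he1 heg horth
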